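/- arXiv:2604.25577 — 2 statements merged into one kernel-verified Lean document; each statement's English description precedes it below -/
import Mathlib

section
/- Second-derivative formula and convexity direction: fix α, β ∈ ℝ with αβ ≠ 0, an index g, and positive reals v_1, …, v_n; let C = ∑_{h≠g} v_h^β and G(t) = t^β + C. The function φ(t) = sign(αβ)·G(t)^α has second derivative at t = v_g equal to sign(αβ)·α·β·G(v_g)^{α−2}·v_g^{β−2}·((α−1)·β·v_g^β + (β−1)·G(v_g)), and the sign of this second derivative equals the sign of (α−1)·β·v_g^β + (β−1)·G(v_g). -/
lemma sign_mul_of_pos {c : ℝ} (hc : 0 < c) (x : ℝ) :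
    Real.sign (c * x) = Real.sign x := by
  rcases lt_trichotomy x 0 with h | h | h
  · rw [Real.sign_of_neg h, Real.sign_of_neg (mul_neg_of_pos_of_neg hc h)]
  · simp [h]
  · rw [Real.sign_of_pos h, Real.sign_of_pos (mul_pos hc h)]

lemma sign_mul_self_pos {x : ℝ} (hx : x ≠ 0) : 0 < Real.sign x * x := by
  rcases lt_trichotomy x 0 with h | h | h
  · rw [Real.sign_of_neg h]; nlinarith
  · exact absurd h hx
  · rw [Real.sign_of_pos h]; nlinarith

/-- **Second-derivative formula and convexity direction**: fix `α, β : ℝ` with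
`α * β ≠ 0`, an index `g`, and positive reals `v 1, …, v n`; let
`C = ∑ h ≠ g, v h ^ β` and `G t = t ^ β + C`.  The function
`φ t = sign (α * β) * (G t) ^ α` has second derivative at `t = v g` equal to
`sign (α * β) * α * β * (G (v g)) ^ (α - 2) * v g ^ (β - 2) *
  ((α - 1) * β * v g ^ β + (β - 1) * G (v g))`,
and the sign of this second derivative equals the sign of
`(α - 1) * β * v g ^ β + (β - 1) * G (v g)`. -/
theorem second_derivative_formula_and_sign {n : ℕ} (α β : ℝ) (hαβ : α * β ≠ 0)
    (g : Fin n) (v : Fin n → ℝ) (hv : ∀ h, 0 < v h) :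
    deriv (deriv (fun t : ℝ =>
        Real.sign (α * β) * (t ^ β + ∑ h ∈ Finset.univ.erase g, v h ^ β) ^ α)) (v g)
      = Real.sign (α * β) * α * β
          * (v g ^ β + ∑ h ∈ Finset.univ.erase g, v h ^ β) ^ (α - 2) * v g ^ (β - 2)
          * ((α - 1) * β * v g ^ β
              + (β - 1) * (v g ^ β + ∑ h ∈ Finset.univ.erase g, v h ^ β)) ∧
    Real.sign (deriv (deriv (fun t : ℝ =>
        Real.sign (α * β) * (t ^ β + ∑ h ∈ Finset.univ.erase g, v h ^ β) ^ α)) (v g))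
      = Real.sign ((α - 1) * β * v g ^ β
          + (β - 1) * (v g ^ β + ∑ h ∈ Finset.univ.erase g, v h ^ β)) := by
  set s := Real.sign (α * β) with hs
  set C := ∑ h ∈ Finset.univ.erase g, v h ^ β with hC
  have hC0 : 0 ≤ C := Finset.sum_nonneg fun h _ => (Real.rpow_pos_of_pos (hv h) β).le
  have hGpos : ∀ t : ℝ, 0 < t → 0 < t ^ β + C := fun t ht =>
    add_pos_of_pos_of_nonneg (Real.rpow_pos_of_pos ht β) hC0
  -- first derivative on Ioi 0
  have hD1 : ∀ t : ℝ, 0 < t →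
      HasDerivAt (fun t : ℝ => s * (t ^ β + C) ^ α)
        (s * (α * (t ^ β + C) ^ (α - 1) * (β * t ^ (β - 1)))) t := by
    intro t ht
    have h1 : HasDerivAt (fun t : ℝ => t ^ β + C) (β * t ^ (β - 1)) t :=
      (Real.hasDerivAt_rpow_const (Or.inl ht.ne')).add_const C
    have h2 : HasDerivAt (fun y : ℝ => y ^ α) (α * (t ^ β + C) ^ (α - 1)) (t ^ β + C) :=
      Real.hasDerivAt_rpow_const (Or.inl (hGpos t ht).ne')
    exact (h2.comp t h1).const_mul s
  have hmem : Set.Ioi (0:ℝ) ∈ nhds (v g) := Ioi_mem_nhds (hv g)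
  have hEq : deriv (fun t : ℝ => s * (t ^ β + C) ^ α)
      =ᶠ[nhds (v g)] fun t => s * (α * (t ^ β + C) ^ (α - 1) * (β * t ^ (β - 1))) := by
    filter_upwards [hmem] with t ht
    exact (hD1 t ht).deriv
  -- second derivative
  set t0 := v g with ht0
  have ht0p : 0 < t0 := hv g
  have h1 : HasDerivAt (fun t : ℝ => t ^ β + C) (β * t0 ^ (β - 1)) t0 :=
    (Real.hasDerivAt_rpow_const (Or.inl ht0p.ne')).add_const C
  have h2 : HasDerivAt (fun y : ℝ => y ^ (α - 1))
      ((α - 1) * (t0 ^ β + C) ^ (α - 1 - 1)) (t0 ^ β + C) :=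
    Real.hasDerivAt_rpow_const (Or.inl (hGpos t0 ht0p).ne')
  have h3 : HasDerivAt (fun t : ℝ => (t ^ β + C) ^ (α - 1))
      ((α - 1) * (t0 ^ β + C) ^ (α - 1 - 1) * (β * t0 ^ (β - 1))) t0 := by
    have := h2.comp t0 h1; exact this
  have h4 : HasDerivAt (fun t : ℝ => t ^ (β - 1)) ((β - 1) * t0 ^ (β - 1 - 1)) t0 :=
    Real.hasDerivAt_rpow_const (Or.inl ht0p.ne')
  have h5 : HasDerivAt (fun t : ℝ => (t ^ β + C) ^ (α - 1) * t ^ (β - 1))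
      ((α - 1) * (t0 ^ β + C) ^ (α - 1 - 1) * (β * t0 ^ (β - 1)) * t0 ^ (β - 1)
        + (t0 ^ β + C) ^ (α - 1) * ((β - 1) * t0 ^ (β - 1 - 1))) t0 := h3.mul h4
  have hfun : (fun t : ℝ => s * (α * (t ^ β + C) ^ (α - 1) * (β * t ^ (β - 1))))
      = fun t : ℝ => (s * α * β) * ((t ^ β + C) ^ (α - 1) * t ^ (β - 1)) := by
    funext t; ring
  have h6 : HasDerivAt (fun t : ℝ => s * (α * (t ^ β + C) ^ (α - 1) * (β * t ^ (β - 1))))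
      ((s * α * β) * ((α - 1) * (t0 ^ β + C) ^ (α - 1 - 1) * (β * t0 ^ (β - 1)) * t0 ^ (β - 1)
        + (t0 ^ β + C) ^ (α - 1) * ((β - 1) * t0 ^ (β - 1 - 1)))) t0 := by
    rw [hfun]; exact h5.const_mul _
  have key : deriv (deriv (fun t : ℝ => s * (t ^ β + C) ^ α)) t0
      = (s * α * β) * ((α - 1) * (t0 ^ β + C) ^ (α - 1 - 1) * (β * t0 ^ (β - 1)) * t0 ^ (β - 1)
        + (t0 ^ β + C) ^ (α - 1) * ((β - 1) * t0 ^ (β - 1 - 1))) := by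
    rw [hEq.deriv_eq]; exact h6.deriv
  set G := t0 ^ β + C with hG
  have hGp : 0 < G := hGpos t0 ht0p
  have e1 : t0 ^ (β - 1) * t0 ^ (β - 1) = t0 ^ (β - 2) * t0 ^ β := by
    rw [← Real.rpow_add ht0p, ← Real.rpow_add ht0p]; ring_nf
  have e2 : G ^ (α - 1) = G ^ (α - 2) * G := by
    rw [← Real.rpow_add_one hGp.ne' (α - 2)]; ring_nf
  have e3 : (β - 1 - 1 : ℝ) = β - 2 := by ring
  have e4 : (α - 1 - 1 : ℝ) = α - 2 := by ring
  have main : deriv (deriv (fun t : ℝ => s * (t ^ β + C) ^ α)) t0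
      = s * α * β * G ^ (α - 2) * t0 ^ (β - 2)
          * ((α - 1) * β * t0 ^ β + (β - 1) * G) := by
    rw [key, e3, e4, e2]
    have : (α - 1) * G ^ (α - 2) * (β * t0 ^ (β - 1)) * t0 ^ (β - 1)
        = (α - 1) * G ^ (α - 2) * β * (t0 ^ (β - 2) * t0 ^ β) := by
      rw [← e1]; ring
    linear_combination (s * α * β * (α - 1) * G ^ (α - 2) * β) * e1
  refine ⟨main, ?_⟩
  rw [main]
  have hpos : 0 < s * α * β * G ^ (α - 2) * t0 ^ (β - 2) := by
    have h1 : 0 < s * (α * β) := sign_mul_self_pos hαβ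
    have h2 : 0 < G ^ (α - 2) := Real.rpow_pos_of_pos hGp _
    have h3 : 0 < t0 ^ (β - 2) := Real.rpow_pos_of_pos ht0p _
    rw [show s * α * β * G ^ (α - 2) * t0 ^ (β - 2)
        = s * (α * β) * G ^ (α - 2) * t0 ^ (β - 2) by ring]
    exact mul_pos (mul_pos h1 h2) h3
  rw [show s * α * β * G ^ (α - 2) * t0 ^ (β - 2)
      * ((α - 1) * β * t0 ^ β + (β - 1) * G)
      = (s * α * β * G ^ (α - 2) * t0 ^ (β - 2))
        * ((α - 1) * β * t0 ^ β + (β - 1) * G) by ring]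
  exact sign_mul_of_pos hpos _
end

section
/- Pareto improvements strictly increase aggregate expenditure: suppose for every user u the bundle x(u,·) maximizes ∑_{i∈I} (s(u,i) − f(g(i)))·y_i over all bundles y : I → {0,1} with ∑_i y_i ≤ K. If x̃ is a feasible allocation with w_u(x̃) ≥ w_u(x) for every user u and w_{u₀}(x̃) > w_{u₀}(x) for some user u₀, then ∑_{u∈U} ∑_{i∈I} f(g(i))·x̃(u,i) > ∑_{u∈U} ∑_{i∈I} f(g(i))·x(u,i). -/
/-- **Pareto improvements strictly increase aggregate expenditure**: let `U` be a finite
user set, `I` a finite item set, `G` a finite group set with group map `g : I → G`,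
`s : U → I → ℝ` scores, `f : G → ℝ` prices, `K` a budget.  Suppose for every user `u`
the bundle `x u` maximizes `∑ i, (s u i - f (g i)) * y i` over feasible bundles `y`
(with `y i ∈ {0,1}` and `∑ i, y i ≤ K`).  If `x'` is a feasible allocation with
`w_u x' ≥ w_u x` for every user `u` and `w_{u₀} x' > w_{u₀} x` for some user `u₀`
(where `w_u x = ∑ i, s u i * x u i`), then
`∑ u, ∑ i, f (g i) * x' u i > ∑ u, ∑ i, f (g i) * x u i`. -/
theorem pareto_improvement_increases_expenditure {U I G : Type*}
    [Fintype U] [Fintype I] [Fintype G]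
    (g : I → G) (s : U → I → ℝ) (f : G → ℝ) (K : ℕ) (x x' : U → I → ℝ)
    (hx_bin : ∀ u i, x u i = 0 ∨ x u i = 1) (hx_budget : ∀ u, ∑ i, x u i ≤ K)
    (h_demand : ∀ u, ∀ y : I → ℝ, (∀ i, y i = 0 ∨ y i = 1) → ∑ i, y i ≤ K →
      ∑ i, (s u i - f (g i)) * y i ≤ ∑ i, (s u i - f (g i)) * x u i)
    (hx'_bin : ∀ u i, x' u i = 0 ∨ x' u i = 1) (hx'_budget : ∀ u, ∑ i, x' u i ≤ K)
    (h_weak : ∀ u, ∑ i, s u i * x u i ≤ ∑ i, s u i * x' u i)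
    (h_strict : ∃ u₀, ∑ i, s u₀ i * x u₀ i < ∑ i, s u₀ i * x' u₀ i) :
    ∑ u, ∑ i, f (g i) * x u i < ∑ u, ∑ i, f (g i) * x' u i := by
  have key : ∀ u, ∑ i, s u i * x' u i - ∑ i, s u i * x u i ≤
      ∑ i, f (g i) * x' u i - ∑ i, f (g i) * x u i := by
    intro u
    have h := h_demand u (x' u) (hx'_bin u) (hx'_budget u)
    simp only [sub_mul] at h
    rw [Finset.sum_sub_distrib, Finset.sum_sub_distrib] at h
    linarith
  obtain ⟨u₀, hu₀⟩ := h_strict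
  apply Finset.sum_lt_sum (fun u _ => by linarith [key u, h_weak u])
  exact ⟨u₀, Finset.mem_univ u₀, by linarith [key u₀]⟩
end
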